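/- Let t > 0, 0 < y < t and F(x) = |x| + (x − y)²/(2t). Then the normalized mean satisfies lim_{T→0⁺} (1/T) · (∫_ℝ x·exp(−F(x)/T) dx) / (∫_ℝ exp(−F(x)/T) dx) = 2(y/t)/(1 − (y/t)²) = m₁(y/t), and the normalized second moment satisfies lim_{T→0⁺} (1/T²) · (∫_ℝ x²·exp(−F(x)/T) dx) / (∫_ℝ exp(−F(x)/T) dx) = (1 − y/t)/(1 + y/t)² + (1 + y/t)/(1 − y/t)² = m₂(y/t). In particular, the bias of X_T(y,t) as an estimator of soft(y,t) = 0 is asymptotically T·m₁(y/t) and its mean square error is asymptotically T²·m₂(y/t). -/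

import Mathlib

open Filter MeasureTheory

section Aux

open Set Real Nat


lemma myIntOn (k : ℕ) {c : ℝ} (hc : 0 < c) :
    IntegrableOn (fun u : ℝ => u ^ k * Real.exp (-(c * u))) (Ioi 0) := by
  have h := integrableOn_rpow_mul_exp_neg_mul_rpow (s := (k : ℝ)) (p := 1)
    (neg_one_lt_zero.trans_le (Nat.cast_nonneg k)) zero_lt_one hc
  refine h.congr_fun (fun x hx => ?_) measurableSet_Ioi
  beta_reduce
  rw [Real.rpow_natCast, Real.rpow_one, neg_mul]

lemma myIntVal (k : ℕ) {c : ℝ} (hc : 0 < c) :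
    ∫ u in Ioi (0:ℝ), u ^ k * Real.exp (-(c * u)) = (k ! : ℝ) / c ^ (k + 1) := by
  have h := Real.integral_rpow_mul_exp_neg_mul_Ioi (a := (k : ℝ) + 1) (by positivity) hc
  rw [show ((k : ℝ) + 1 - 1) = (k : ℝ) by ring, Real.Gamma_nat_eq_factorial] at h
  rw [show ((k : ℝ) + 1) = ((k + 1 : ℕ) : ℝ) by push_cast; ring, Real.rpow_natCast] at h
  simp_rw [Real.rpow_natCast] at h
  rw [h, one_div, inv_pow, inv_mul_eq_div]

lemma integrable_abs_comp {f : ℝ → ℝ} (hf : IntegrableOn (fun x => f |x|) (Ioi 0)) :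
    Integrable (fun x => f |x|) := by
  have int_Iic : IntegrableOn (fun x ↦ f |x|) (Iic 0) := by
    rw [← Measure.map_neg_eq_self (volume : Measure ℝ)]
    let m : MeasurableEmbedding fun x : ℝ => -x := (Homeomorph.neg ℝ).measurableEmbedding
    rw [m.integrableOn_map_iff]
    simp_rw [Function.comp_def, abs_neg, neg_preimage, neg_Iic, neg_zero]
    exact Iff.mpr integrableOn_Ici_iff_integrableOn_Ioi hf
  have h := int_Iic.union hf
  rwa [Iic_union_Ioi, integrableOn_univ] at h

lemma integrableOn_Iic_of_neg {f : ℝ → ℝ} (hf : IntegrableOn (fun x => f (-x)) (Ioi 0)) :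
    IntegrableOn f (Iic 0) := by
  rw [← Measure.map_neg_eq_self (volume : Measure ℝ)]
  let m : MeasurableEmbedding fun x : ℝ => -x := (Homeomorph.neg ℝ).measurableEmbedding
  rw [m.integrableOn_map_iff]
  simp_rw [Function.comp_def, neg_preimage, neg_Iic, neg_zero]
  exact Iff.mpr integrableOn_Ici_iff_integrableOn_Ioi hf

lemma fullVal (k : ℕ) {b : ℝ} (hb0 : 0 ≤ b) (hb1 : b < 1) :
    Integrable (fun u : ℝ => u ^ k * Real.exp (b * u - |u|)) ∧
    ∫ u : ℝ, u ^ k * Real.exp (b * u - |u|)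
      = (k ! : ℝ) / (1 - b) ^ (k + 1) + (-1 : ℝ) ^ k * ((k ! : ℝ) / (1 + b) ^ (k + 1)) := by
  have e1 : ∀ x ∈ Ioi (0:ℝ), x ^ k * Real.exp (-((1 - b) * x))
      = x ^ k * Real.exp (b * x - |x|) := by
    intro x hx
    rw [abs_of_pos hx]
    ring_nf
  have e2 : ∀ x ∈ Ioi (0:ℝ), (-1 : ℝ) ^ k * (x ^ k * Real.exp (-((1 + b) * x)))
      = (-x) ^ k * Real.exp (b * (-x) - |(-x)|) := by
    intro x hx
    rw [abs_neg, abs_of_pos hx, neg_pow]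
    ring_nf
  have h1 : IntegrableOn (fun u : ℝ => u ^ k * Real.exp (b * u - |u|)) (Ioi 0) :=
    (myIntOn k (by linarith : (0:ℝ) < 1 - b)).congr_fun e1 measurableSet_Ioi
  have h2 : IntegrableOn (fun u : ℝ => u ^ k * Real.exp (b * u - |u|)) (Iic 0) := by
    apply integrableOn_Iic_of_neg
    exact MeasureTheory.IntegrableOn.congr_fun
      ((myIntOn k (by linarith : (0:ℝ) < 1 + b)).const_mul ((-1 : ℝ) ^ k)) e2 measurableSet_Ioi
  constructor
  · have h := h2.union h1
    rwa [Iic_union_Ioi, integrableOn_univ] at h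
  · rw [← intervalIntegral.integral_Iic_add_Ioi h2 h1]
    have v1 : ∫ u in Ioi (0:ℝ), u ^ k * Real.exp (b * u - |u|)
        = (k ! : ℝ) / (1 - b) ^ (k + 1) := by
      rw [← setIntegral_congr_fun measurableSet_Ioi e1, myIntVal k (by linarith)]
    have v2 : ∫ u in Iic (0:ℝ), u ^ k * Real.exp (b * u - |u|)
        = (-1 : ℝ) ^ k * ((k ! : ℝ) / (1 + b) ^ (k + 1)) := by
      have hc := integral_comp_neg_Ioi (0:ℝ)
        (fun u : ℝ => u ^ k * Real.exp (b * u - |u|))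
      rw [neg_zero] at hc
      rw [← hc, ← setIntegral_congr_fun measurableSet_Ioi e2, MeasureTheory.integral_const_mul,
        myIntVal k (by linarith)]
    rw [v1, v2]
    ring

lemma tendstoN (k : ℕ) {a t : ℝ} (ht : 0 < t) (ha0 : 0 < a) (ha1 : a < 1) :
    Tendsto (fun T : ℝ => ∫ u : ℝ, u ^ k * Real.exp (a * u - |u| - T * u ^ 2 / (2 * t)))
      (nhdsWithin 0 (Set.Ioi 0))
      (nhds ((k ! : ℝ) / (1 - a) ^ (k + 1) + (-1 : ℝ) ^ k * ((k ! : ℝ) / (1 + a) ^ (k + 1)))) := by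
  rw [← (fullVal k ha0.le ha1).2]
  apply tendsto_integral_filter_of_dominated_convergence
      (bound := fun u : ℝ => |u| ^ k * Real.exp (-((1 - a) * |u|)))
  · exact Eventually.of_forall fun T => Continuous.aestronglyMeasurable (by fun_prop)
  · filter_upwards [self_mem_nhdsWithin] with T hT
    apply Eventually.of_forall
    intro u
    rw [Real.norm_eq_abs, abs_mul, abs_pow, Real.abs_exp]
    have h1 : a * u ≤ a * |u| := mul_le_mul_of_nonneg_left (le_abs_self u) ha0.le
    have hT0 : (0:ℝ) < T := hT
    have h2 : 0 ≤ T * u ^ 2 / (2 * t) := by positivity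
    exact mul_le_mul_of_nonneg_left (Real.exp_le_exp.mpr (by linarith)) (by positivity)
  · exact integrable_abs_comp (f := fun x => x ^ k * Real.exp (-((1 - a) * x)))
      (MeasureTheory.IntegrableOn.congr_fun (myIntOn k (c := 1 - a) (by linarith))
        (fun x hx => by rw [abs_of_pos hx]) measurableSet_Ioi)
  · apply Eventually.of_forall
    intro u
    have hcont : Continuous fun T : ℝ =>
        u ^ k * Real.exp (a * u - |u| - T * u ^ 2 / (2 * t)) := by fun_prop
    have h := (hcont.tendsto 0).mono_left
      (nhdsWithin_le_nhds (s := Set.Ioi (0:ℝ)))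
    simpa using h


lemma const1 (a : ℝ) (h1 : 0 < 1 - a) (h2 : 0 < 1 + a) :
    ((1! : ℝ) / (1 - a) ^ (1 + 1) + (-1 : ℝ) ^ 1 * ((1! : ℝ) / (1 + a) ^ (1 + 1))) /
      ((0! : ℝ) / (1 - a) ^ (0 + 1) + (-1 : ℝ) ^ 0 * ((0! : ℝ) / (1 + a) ^ (0 + 1)))
      = 2 * a / (1 - a ^ 2) := by
  have hD : (0:ℝ) < 1 / (1 - a) + 1 / (1 + a) := by positivity
  have e3 : (1:ℝ) - a ^ 2 ≠ 0 := by
    have h : (1:ℝ) - a ^ 2 = (1 - a) * (1 + a) := by ring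
    rw [h]; positivity
  norm_num
  rw [div_eq_div_iff (by norm_num at hD ⊢; linarith) e3]
  field_simp
  ring

lemma const2 (a : ℝ) (h1 : 0 < 1 - a) (h2 : 0 < 1 + a) :
    ((2! : ℝ) / (1 - a) ^ (2 + 1) + (-1 : ℝ) ^ 2 * ((2! : ℝ) / (1 + a) ^ (2 + 1))) /
      ((0! : ℝ) / (1 - a) ^ (0 + 1) + (-1 : ℝ) ^ 0 * ((0! : ℝ) / (1 + a) ^ (0 + 1)))
      = (1 - a) / (1 + a) ^ 2 + (1 + a) / (1 - a) ^ 2 := by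
  have hD : (0:ℝ) < 1 / (1 - a) + 1 / (1 + a) := by positivity
  norm_num
  rw [div_eq_iff (by norm_num at hD ⊢; linarith)]
  field_simp
  ring


/-- The one-dimensional objective `F(x) = |x| + (x − y)²/(2t)`. -/
noncomputable def obj1 (y t x : ℝ) : ℝ := |x| + (x - y) ^ 2 / (2 * t)

lemma subsId (k : ℕ) {y t T : ℝ} (ht : 0 < t) (hT : 0 < T) :
    ∫ x : ℝ, x ^ k * Real.exp (-(obj1 y t x) / T)
      = T ^ (k + 1) * Real.exp (-(y ^ 2 / (2 * t * T))) *
        ∫ u : ℝ, u ^ k * Real.exp ((y / t) * u - |u| - T * u ^ 2 / (2 * t)) := by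
  have hconv := MeasureTheory.Measure.integral_comp_mul_left
    (fun x : ℝ => x ^ k * Real.exp (-(obj1 y t x) / T)) T
  have key : ∀ u : ℝ, (T * u) ^ k * Real.exp (-(obj1 y t (T * u)) / T)
      = (T ^ k * Real.exp (-(y ^ 2 / (2 * t * T)))) *
        (u ^ k * Real.exp ((y / t) * u - |u| - T * u ^ 2 / (2 * t))) := by
    intro u
    have hexp : -(T * |u| + (T * u - y) ^ 2 / (2 * t)) / T
        = -(y ^ 2 / (2 * t * T)) + ((y / t) * u - |u| - T * u ^ 2 / (2 * t)) := by
      field_simp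
      ring
    simp only [obj1]
    rw [abs_mul, abs_of_pos hT, hexp, Real.exp_add, mul_pow]
    ring
  simp_rw [key] at hconv
  rw [MeasureTheory.integral_const_mul, abs_of_pos (inv_pos.mpr hT), smul_eq_mul] at hconv
  have h2 : T * ((T ^ k * Real.exp (-(y ^ 2 / (2 * t * T)))) *
      ∫ u : ℝ, u ^ k * Real.exp ((y / t) * u - |u| - T * u ^ 2 / (2 * t)))
      = ∫ x : ℝ, x ^ k * Real.exp (-(obj1 y t x) / T) := by
    rw [hconv, ← mul_assoc, mul_inv_cancel₀ hT.ne', one_mul]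
  rw [← h2]
  ring

lemma master (k : ℕ) (t y : ℝ) (ht : 0 < t) (hy0 : 0 < y) (hyt : y < t) :
    Tendsto (fun T : ℝ => 1 / T ^ k * ((∫ x : ℝ, x ^ k * Real.exp (-(obj1 y t x) / T)) /
        ∫ x : ℝ, Real.exp (-(obj1 y t x) / T)))
      (nhdsWithin 0 (Set.Ioi 0))
      (nhds (((k ! : ℝ) / (1 - y / t) ^ (k + 1) +
          (-1 : ℝ) ^ k * ((k ! : ℝ) / (1 + y / t) ^ (k + 1))) /
        ((0! : ℝ) / (1 - y / t) ^ (0 + 1) +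
          (-1 : ℝ) ^ 0 * ((0! : ℝ) / (1 + y / t) ^ (0 + 1))))) := by
  have ha0 : 0 < y / t := div_pos hy0 ht
  have ha1 : y / t < 1 := (div_lt_one ht).mpr hyt
  have h1a : (0:ℝ) < 1 - y / t := by linarith
  have h1a' : (0:ℝ) < 1 + y / t := by linarith
  have hN := tendstoN k ht ha0 ha1
  have hD := tendstoN 0 ht ha0 ha1
  have hL0 : ((0! : ℝ) / (1 - y / t) ^ (0 + 1) +
      (-1 : ℝ) ^ 0 * ((0! : ℝ) / (1 + y / t) ^ (0 + 1))) ≠ 0 := by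
    norm_num
    positivity
  have hDiv := hN.div hD hL0
  refine Tendsto.congr' ?_ hDiv
  filter_upwards [self_mem_nhdsWithin] with T hT
  have hT0 : (0:ℝ) < T := hT
  have hden : ∫ x : ℝ, Real.exp (-(obj1 y t x) / T)
      = T ^ (0 + 1) * Real.exp (-(y ^ 2 / (2 * t * T))) *
        ∫ u : ℝ, u ^ 0 * Real.exp ((y / t) * u - |u| - T * u ^ 2 / (2 * t)) := by
    rw [← subsId 0 ht hT0]
    simp
  rw [hden, subsId k ht hT0]
  set N := ∫ u : ℝ, u ^ k * Real.exp ((y / t) * u - |u| - T * u ^ 2 / (2 * t)) with hNdef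
  set D := ∫ u : ℝ, u ^ 0 * Real.exp ((y / t) * u - |u| - T * u ^ 2 / (2 * t)) with hDdef
  have hE : Real.exp (-(y ^ 2 / (2 * t * T))) ≠ 0 := Real.exp_ne_zero _
  rw [show T ^ (k + 1) * Real.exp (-(y ^ 2 / (2 * t * T))) * N
      = (T * Real.exp (-(y ^ 2 / (2 * t * T)))) * (T ^ k * N) by ring,
    show T ^ (0 + 1) * Real.exp (-(y ^ 2 / (2 * t * T))) * D
      = (T * Real.exp (-(y ^ 2 / (2 * t * T)))) * D by ring,
    mul_div_mul_left _ _ (by positivity), mul_div_assoc, ← mul_assoc, one_div,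
    inv_mul_cancel₀ (pow_ne_zero k hT0.ne'), one_mul]
  rfl


end Aux

open Nat in
/-- For `0 < y < t`, the mean of `X_T(y,t)` is asymptotically `T·m₁(y/t)` and its second
moment is asymptotically `T²·m₂(y/t)`, with `m₁(u) = 2u/(1 − u²)` and
`m₂(u) = (1 − u)/(1 + u)² + (1 + u)/(1 − u)²`. -/
theorem stmt17 (t y : ℝ) (ht : 0 < t) (hy0 : 0 < y) (hyt : y < t) :
    Tendsto
      (fun T : ℝ =>
        1 / T * ((∫ x : ℝ, x * Real.exp (-(obj1 y t x) / T)) /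
          ∫ x : ℝ, Real.exp (-(obj1 y t x) / T)))
      (nhdsWithin 0 (Set.Ioi 0))
      (nhds (2 * (y / t) / (1 - (y / t) ^ 2))) ∧
    Tendsto
      (fun T : ℝ =>
        1 / T ^ 2 * ((∫ x : ℝ, x ^ 2 * Real.exp (-(obj1 y t x) / T)) /
          ∫ x : ℝ, Real.exp (-(obj1 y t x) / T)))
      (nhdsWithin 0 (Set.Ioi 0))
      (nhds ((1 - y / t) / (1 + y / t) ^ 2 + (1 + y / t) / (1 - y / t) ^ 2)) := by
  have ha0 : 0 < y / t := div_pos hy0 ht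
  have ha1 : y / t < 1 := (div_lt_one ht).mpr hyt
  have h1a : (0:ℝ) < 1 - y / t := by linarith
  have h1a' : (0:ℝ) < 1 + y / t := by linarith
  constructor
  · have h := master 1 t y ht hy0 hyt
    rw [const1 (y / t) h1a h1a'] at h
    simp only [pow_one] at h
    exact h
  · have h := master 2 t y ht hy0 hyt
    rw [const2 (y / t) h1a h1a'] at h
    exact h
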